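/- If the edge-weighted graph G' has a (k, 4n)-center, then G has a k-multicolored independent set. -/

import Mathlib

/-- The vertex set of the `k`-Multicolored Independent Set instance: `(i, l)` is the `(l+1)`-th
vertex of class `V_{i+1}`. -/
abbrev PV (k n : ℕ) := Fin k × Fin n

/-- Index set for the vertices `u_e` of `G'`: one for each edge of `G` between different
classes, oriented so that the class of the first endpoint is smaller. -/
abbrev CrossE (k n : ℕ) (G : SimpleGraph (PV k n)) :=
  {q : PV k n × PV k n // G.Adj q.1 q.2 ∧ q.1.1 < q.2.1}

/-- Vertices of `G'`: the vertices `p_l^i` (`Sum.inl`), the guard vertices `g_i^1, g_i^2`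
(first `Fin k × Bool` component), the vertices `a_i, b_i` (second `Fin k × Bool` component,
`false` for `a_i` and `true` for `b_i`), and the vertices `u_e`. -/
abbrev GV' (k n : ℕ) (G : SimpleGraph (PV k n)) :=
  PV k n ⊕ ((Fin k × Bool) ⊕ ((Fin k × Bool) ⊕ CrossE k n G))

/-- Edges of `G'` (one orientation each). -/
def rel' {k n : ℕ} (G : SimpleGraph (PV k n)) : GV' k n G → GV' k n G → Prop
  | Sum.inl p, Sum.inr (Sum.inl g) => p.1 = g.1
  | Sum.inl p, Sum.inr (Sum.inr (Sum.inl ab)) => p.1 = ab.1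
  | Sum.inr (Sum.inr (Sum.inr u)), Sum.inr (Sum.inr (Sum.inl ab)) =>
      ab.1 = u.1.1.1 ∨ ab.1 = u.1.2.1
  | _, _ => False

/-- The graph `G'`. -/
def G'graph {k n : ℕ} (G : SimpleGraph (PV k n)) : SimpleGraph (GV' k n G) :=
  SimpleGraph.fromRel (rel' G)

/-- Edge weights of `G'` (one orientation; `0` on non-edges). `l : Fin n` stands for the
`(l+1)`-th vertex, so e.g. the edge `(a_i, p_l^i)` has weight `n + (l+1)`, the edge
`(b_i, p_l^i)` has weight `2n − (l+1) + 1 = 2n − l`, the edge `(u_e, a_{i_m})` has weight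
`3n − (j_m+1) + 1 = 3n − j_m` and the edge `(u_e, b_{i_m})` has weight `2n + (j_m+1)`. -/
def w0 {k n : ℕ} (G : SimpleGraph (PV k n)) : GV' k n G → GV' k n G → ℕ
  | Sum.inl p, Sum.inr (Sum.inl g) => if p.1 = g.1 then 4 * n else 0
  | Sum.inl p, Sum.inr (Sum.inr (Sum.inl ab)) =>
      if p.1 = ab.1 then (if ab.2 then 2 * n - (p.2 : ℕ) else n + (p.2 : ℕ) + 1) else 0
  | Sum.inr (Sum.inr (Sum.inr u)), Sum.inr (Sum.inr (Sum.inl ab)) =>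
      if ab.1 = u.1.1.1 then
        (if ab.2 then 2 * n + (u.1.1.2 : ℕ) + 1 else 3 * n - (u.1.1.2 : ℕ))
      else if ab.1 = u.1.2.1 then
        (if ab.2 then 2 * n + (u.1.2.2 : ℕ) + 1 else 3 * n - (u.1.2.2 : ℕ))
      else 0
  | _, _ => 0

/-- The (symmetric) weight function of `G'`. -/
def wG' {k n : ℕ} (G : SimpleGraph (PV k n)) (x y : GV' k n G) : ℕ :=
  max (w0 G x y) (w0 G y x)

/-- The total weight of a walk. -/
def wWeight {V : Type*} (G : SimpleGraph V) (w : V → V → ℕ) {a b : V} (p : G.Walk a b) : ℕ :=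
  (p.darts.map fun d => w d.toProd.1 d.toProd.2).sum

/-- `K` is a `(k,r)`-center of the edge-weighted graph `(G, w)`. -/
def isCenter {V : Type*} (G : SimpleGraph V) (w : V → V → ℕ) (k r : ℕ) (K : Finset V) : Prop :=
  K.card = k ∧ ∀ u : V, ∃ v ∈ K, ∃ p : G.Walk v u, wWeight G w p ≤ r


open SimpleGraph in
lemma wWeight_cons {V : Type*} (G : SimpleGraph V) (w : V → V → ℕ) {a b c : V}
    (h : G.Adj a b) (p : G.Walk b c) :
    wWeight G w (Walk.cons h p) = w a b + wWeight G w p := rfl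

open SimpleGraph in
lemma wWeight_nil {V : Type*} (G : SimpleGraph V) (w : V → V → ℕ) {a : V} :
    wWeight G w (Walk.nil : G.Walk a a) = 0 := rfl

open SimpleGraph in
lemma wWeight_reverse {V : Type*} (G : SimpleGraph V) (w : V → V → ℕ)
    (hs : ∀ a b, w a b = w b a) {a b : V} (p : G.Walk a b) :
    wWeight G w p.reverse = wWeight G w p := by
  unfold wWeight
  rw [Walk.darts_reverse, List.map_reverse, List.sum_reverse, List.map_map]
  congr 1
  apply List.map_congr_left
  intro d _
  simp [Function.comp, SimpleGraph.Dart.symm, hs]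

lemma w0_pos {k n : ℕ} (hn : 1 ≤ n) (G : SimpleGraph (PV k n)) (x y : GV' k n G)
    (h : rel' G x y) : 1 ≤ w0 G x y := by
  obtain (p | (g | (ab | u))) := x <;> obtain (p' | (g' | (ab' | u'))) := y <;>
    simp only [rel'] at h
  · simp only [w0, if_pos h]; omega
  · have := p.2.isLt
    simp only [w0, if_pos h]
    cases ab'.2 <;> simp <;> omega
  · have h1 := u.1.1.2.isLt
    have h2 := u.1.2.2.isLt
    rcases h with h | h
    · simp only [w0, if_pos h]
      cases ab'.2 <;> simp <;> omega
    · by_cases h' : ab'.1 = u.1.1.1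
      · simp only [w0, if_pos h']
        cases ab'.2 <;> simp <;> omega
      · simp only [w0, if_neg h', if_pos h]
        cases ab'.2 <;> simp <;> omega

lemma wG'_pos {k n : ℕ} (hn : 1 ≤ n) (G : SimpleGraph (PV k n)) {x y : GV' k n G}
    (h : (G'graph G).Adj x y) : 1 ≤ wG' G x y := by
  rw [G'graph, SimpleGraph.fromRel_adj] at h
  rcases h.2 with h | h
  · exact le_max_of_le_left (w0_pos hn G x y h)
  · exact le_max_of_le_right (w0_pos hn G y x h)
lemma adj_guard {k n : ℕ} (G : SimpleGraph (PV k n)) {g : Fin k × Bool} {x : GV' k n G}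
    (h : (G'graph G).Adj (Sum.inr (Sum.inl g)) x) :
    ∃ p : PV k n, x = Sum.inl p ∧ p.1 = g.1 ∧
      wG' G (Sum.inr (Sum.inl g)) x = 4 * n := by
  rw [G'graph, SimpleGraph.fromRel_adj] at h
  obtain (p | (g' | (ab | u))) := x <;> simp only [rel'] at h <;>
    [skip; simp at h; simp at h; simp at h]
  refine ⟨p, rfl, ?_, ?_⟩
  · rcases h.2 with h' | h'
    · exact h'.elim
    · exact h'
  · have hp : p.1 = g.1 := by rcases h.2 with h' | h'; exact h'.elim; exact h'
    simp [wG', w0, hp]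

lemma adj_inl {k n : ℕ} (hn : 1 ≤ n) (G : SimpleGraph (PV k n)) {p : PV k n} {x : GV' k n G}
    (h : (G'graph G).Adj (Sum.inl p) x) : n + 1 ≤ wG' G (Sum.inl p) x := by
  rw [G'graph, SimpleGraph.fromRel_adj] at h
  have hl := p.2.isLt
  obtain (p' | (g | (ab | u))) := x <;> simp only [rel'] at h <;>
    rcases h.2 with h' | h' <;> try exact h'.elim
  · simp [wG', w0, h']; omega
  · simp only [wG', w0, if_pos h']
    cases ab.2 <;> simp <;> omega

lemma adj_ue {k n : ℕ} (G : SimpleGraph (PV k n)) {u : CrossE k n G} {x : GV' k n G}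
    (h : (G'graph G).Adj (Sum.inr (Sum.inr (Sum.inr u))) x) :
    ∃ ab : Fin k × Bool, x = Sum.inr (Sum.inr (Sum.inl ab)) ∧
      (ab.1 = u.1.1.1 ∨ ab.1 = u.1.2.1) ∧
      2 * n + 1 ≤ wG' G (Sum.inr (Sum.inr (Sum.inr u))) x := by
  rw [G'graph, SimpleGraph.fromRel_adj] at h
  have h1 := u.1.1.2.isLt
  have h2 := u.1.2.2.isLt
  obtain (p' | (g | (ab | u'))) := x <;> simp only [rel'] at h <;>
    rcases h.2 with h' | h' <;> try exact h'.elim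
  refine ⟨ab, rfl, h', ?_⟩
  rcases h' with h' | h'
  · simp only [wG', w0, if_pos h']
    cases ab.2 <;> simp <;> omega
  · by_cases h'' : ab.1 = u.1.1.1
    · simp only [wG', w0, if_pos h'']
      cases ab.2 <;> simp <;> omega
    · simp only [wG', w0, if_neg h'', if_pos h']
      cases ab.2 <;> simp <;> omega

lemma adj_ab {k n : ℕ} (G : SimpleGraph (PV k n)) {ab : Fin k × Bool} {x : GV' k n G}
    (h : (G'graph G).Adj (Sum.inr (Sum.inr (Sum.inl ab))) x) :
    (∃ p : PV k n, x = Sum.inl p ∧ p.1 = ab.1) ∨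
      2 * n + 1 ≤ wG' G (Sum.inr (Sum.inr (Sum.inl ab))) x := by
  rw [G'graph, SimpleGraph.fromRel_adj] at h
  obtain (p' | (g | (ab' | u'))) := x <;> simp only [rel'] at h <;>
    rcases h.2 with h' | h' <;> try exact h'.elim
  · exact Or.inl ⟨p', rfl, h'⟩
  · right
    have h1 := u'.1.1.2.isLt
    have h2 := u'.1.2.2.isLt
    rcases h' with h' | h'
    · simp only [wG', w0, if_pos h']
      cases ab.2 <;> simp <;> omega
    · by_cases h'' : ab.1 = u'.1.1.1
      · simp only [wG', w0, if_pos h'']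
        cases ab.2 <;> simp <;> omega
      · simp only [wG', w0, if_neg h'', if_pos h']
        cases ab.2 <;> simp <;> omega
open SimpleGraph in
lemma guard_rev {k n : ℕ} (hn : 1 ≤ n) (G : SimpleGraph (PV k n)) {v : GV' k n G}
    {g : Fin k × Bool} (q : (G'graph G).Walk (Sum.inr (Sum.inl g)) v)
    (hw : wWeight (G'graph G) (wG' G) q ≤ 4 * n) :
    v = Sum.inr (Sum.inl g) ∨ ∃ l : Fin n, v = Sum.inl (g.1, l) := by
  cases q with
  | nil => exact Or.inl rfl
  | cons h1 q1 =>
    obtain ⟨p, rfl, hp, hwt⟩ := adj_guard G h1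
    cases q1 with
    | nil => exact Or.inr ⟨p.2, by rw [← hp]⟩
    | cons h2 q2 =>
      exfalso
      have hpos := wG'_pos hn G h2
      simp only [wWeight_cons] at hw
      rw [hwt] at hw
      omega

open SimpleGraph in
lemma guard_cover {k n : ℕ} (hn : 1 ≤ n) (G : SimpleGraph (PV k n)) {v : GV' k n G}
    {g : Fin k × Bool} (p : (G'graph G).Walk v (Sum.inr (Sum.inl g)))
    (hw : wWeight (G'graph G) (wG' G) p ≤ 4 * n) :
    v = Sum.inr (Sum.inl g) ∨ ∃ l : Fin n, v = Sum.inl (g.1, l) := by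
  refine guard_rev hn G p.reverse ?_
  rwa [wWeight_reverse (G'graph G) (wG' G) (fun a b => max_comm _ _) p]
open SimpleGraph in
lemma ue_rev {k n : ℕ} (hn : 1 ≤ n) (G : SimpleGraph (PV k n)) (e : CrossE k n G)
    (i : Fin k) (l : Fin n) (hA : i = e.1.1.1 → l = e.1.1.2) (hB : i = e.1.2.1 → l = e.1.2.2)
    (q : (G'graph G).Walk (Sum.inr (Sum.inr (Sum.inr e))) (Sum.inl (i, l)))
    (hw : wWeight (G'graph G) (wG' G) q ≤ 4 * n) : False := by
  have hj1 := e.1.1.2.isLt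
  have hj2 := e.1.2.2.isLt
  have hlt := e.2.2
  cases q with
  | cons h1 q1 =>
    obtain ⟨ab, rfl, hab, hw1⟩ := adj_ue G h1
    cases q1 with
    | cons h2 q2 =>
      rcases adj_ab G h2 with ⟨p2, rfl, hp2⟩ | hw2
      · cases q2 with
        | nil =>
          -- p2 = (i, l); compute the exact total weight
          simp only [wWeight_cons, wWeight_nil] at hw
          have hi : i = ab.1 := by
            have : (i, l).1 = ab.1 := hp2
            exact this
          have hE1 : wG' G (Sum.inr (Sum.inr (Sum.inl ab))) (Sum.inl (i, l)) =
              if ab.2 then 2 * n - (l : ℕ) else n + (l : ℕ) + 1 := by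
            simp [wG', w0, hi]
          rcases hab with hab | hab
          · have hl : l = e.1.1.2 := hA (hi.trans hab)
            have hE2 : wG' G (Sum.inr (Sum.inr (Sum.inr e))) (Sum.inr (Sum.inr (Sum.inl ab))) =
                if ab.2 then 2 * n + (e.1.1.2 : ℕ) + 1 else 3 * n - (e.1.1.2 : ℕ) := by
              simp [wG', w0, hab]
            rw [hE1, hE2, hl] at hw
            cases hb : ab.2 <;> simp [hb] at hw <;> omega
          · have hl : l = e.1.2.2 := hB (hi.trans hab)
            have hne : (e.1.2.1 : Fin k) ≠ e.1.1.1 := Fin.ne_of_gt hlt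
            have hE2 : wG' G (Sum.inr (Sum.inr (Sum.inr e))) (Sum.inr (Sum.inr (Sum.inl ab))) =
                if ab.2 then 2 * n + (e.1.2.2 : ℕ) + 1 else 3 * n - (e.1.2.2 : ℕ) := by
              simp [wG', w0, hab, hne]
            rw [hE1, hE2, hl] at hw
            cases hb : ab.2 <;> simp [hb] at hw <;> omega
        | cons h3 q3 =>
          have hw3 := adj_inl hn G h3
          have hw2 : n + 1 ≤ wG' G (Sum.inr (Sum.inr (Sum.inl ab))) (Sum.inl p2) := by
            have hl2 := p2.2.isLt
            simp only [wG', w0, if_pos hp2]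
            cases ab.2 <;> simp <;> omega
          simp only [wWeight_cons] at hw
          omega
      · simp only [wWeight_cons] at hw
        omega
/-- If `G'` has a `(k, 4n)`-center, then `G` has a `k`-multicolored independent set. -/
theorem stmt6 (k n : ℕ) (hk : 1 ≤ k) (hn : 1 ≤ n) (G : SimpleGraph (PV k n))
    (hclique : ∀ (i : Fin k) (l l' : Fin n), l ≠ l' → G.Adj (i, l) (i, l'))
    (hcenter : ∃ K : Finset (GV' k n G), isCenter (G'graph G) (wG' G) k (4 * n) K) :
    ∃ S : Finset (PV k n), (∀ i : Fin k, ∃! l : Fin n, (i, l) ∈ S) ∧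
      ∀ u ∈ S, ∀ v ∈ S, ¬ G.Adj u v := by
  classical
  obtain ⟨K, hcard, hcov⟩ := hcenter
  have stepA : ∀ (i : Fin k) (b : Bool),
      Sum.inr (Sum.inl (i, b)) ∈ K ∨ ∃ l : Fin n, Sum.inl (i, l) ∈ K := by
    intro i b
    obtain ⟨v, hvK, p, hp⟩ := hcov (Sum.inr (Sum.inl (i, b)))
    rcases guard_cover hn G p hp with h | ⟨l, h⟩
    · exact Or.inl (by rwa [h] at hvK)
    · exact Or.inr ⟨l, by rwa [h] at hvK⟩
  have stepB : ∀ i : Fin k, ∃ l : Fin n, Sum.inl (i, l) ∈ K := by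
    by_contra hB
    push_neg at hB
    obtain ⟨i0, hi0⟩ := hB
    have hg : ∀ b : Bool, Sum.inr (Sum.inl (i0, b)) ∈ K := by
      intro b
      rcases stepA i0 b with h | ⟨l, h⟩
      · exact h
      · exact absurd h (hi0 l)
    set f : Fin k → GV' k n G := fun i =>
      if h : ∃ l : Fin n, Sum.inl (i, l) ∈ K then Sum.inl (i, h.choose)
      else Sum.inr (Sum.inl (i, false)) with hf
    have hfK : ∀ i, f i ∈ K := by
      intro i
      by_cases h : ∃ l : Fin n, Sum.inl (i, l) ∈ K
      · simp only [hf, dif_pos h]; exact h.choose_spec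
      · simp only [hf, dif_neg h]
        rcases stepA i false with h' | h'
        · exact h'
        · exact absurd h' h
    have hfinj : Function.Injective f := by
      intro a b hab
      simp only [hf] at hab
      by_cases ha : ∃ l : Fin n, Sum.inl (a, l) ∈ K <;>
        by_cases hb : ∃ l : Fin n, Sum.inl (b, l) ∈ K
      · rw [dif_pos ha, dif_pos hb] at hab
        exact congrArg Prod.fst (Sum.inl.inj hab)
      · rw [dif_pos ha, dif_neg hb] at hab
        exact absurd hab Sum.inl_ne_inr
      · rw [dif_neg ha, dif_pos hb] at hab
        exact absurd hab Sum.inr_ne_inl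
      · rw [dif_neg ha, dif_neg hb] at hab
        exact congrArg Prod.fst (Sum.inl.inj (Sum.inr.inj hab))
    have hnotmem : Sum.inr (Sum.inl (i0, true)) ∉ Finset.univ.image f := by
      intro hx
      obtain ⟨i, _, hfi⟩ := Finset.mem_image.mp hx
      simp only [hf] at hfi
      by_cases h : ∃ l : Fin n, Sum.inl (i, l) ∈ K
      · rw [dif_pos h] at hfi
        exact absurd hfi Sum.inl_ne_inr
      · rw [dif_neg h] at hfi
        exact Bool.noConfusion (congrArg Prod.snd (Sum.inl.inj (Sum.inr.inj hfi)))
    have hsub : insert (Sum.inr (Sum.inl (i0, true))) (Finset.univ.image f) ⊆ K := by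
      intro x hx
      rcases Finset.mem_insert.mp hx with rfl | hx
      · exact hg true
      · obtain ⟨i, _, rfl⟩ := Finset.mem_image.mp hx
        exact hfK i
    have := Finset.card_le_card hsub
    rw [Finset.card_insert_of_notMem hnotmem, Finset.card_image_of_injective _ hfinj,
      Finset.card_univ, Fintype.card_fin, hcard] at this
    omega
  choose σ hσ using stepB
  have hinj : Function.Injective (fun i => (Sum.inl (i, σ i) : GV' k n G)) := by
    intro a b hab
    simp only [Sum.inl.injEq, Prod.mk.injEq] at hab
    exact hab.1
  have hKeq : K = Finset.univ.image (fun i => (Sum.inl (i, σ i) : GV' k n G)) := by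
    refine (Finset.eq_of_subset_of_card_le ?_ ?_).symm
    · intro x hx
      obtain ⟨i, _, rfl⟩ := Finset.mem_image.mp hx
      exact hσ i
    · rw [hcard, Finset.card_image_of_injective _ hinj, Finset.card_univ, Fintype.card_fin]
  have hrev : ∀ (e : CrossE k n G) (j : Fin k) (l : Fin n),
      (j = e.1.1.1 → l = e.1.1.2) → (j = e.1.2.1 → l = e.1.2.2) →
      ∀ p : (G'graph G).Walk (Sum.inl (j, l)) (Sum.inr (Sum.inr (Sum.inr e))),
      wWeight (G'graph G) (wG' G) p ≤ 4 * n → False := by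
    intro e j l hA hB p hp
    refine ue_rev hn G e j l hA hB p.reverse ?_
    rwa [wWeight_reverse (G'graph G) (wG' G) (fun a b => max_comm _ _) p]
  refine ⟨Finset.univ.image (fun i => (i, σ i)), ?_, ?_⟩
  · intro i
    refine ⟨σ i, Finset.mem_image.mpr ⟨i, Finset.mem_univ i, rfl⟩, ?_⟩
    intro l hl
    obtain ⟨j, _, hj⟩ := Finset.mem_image.mp hl
    simp only [Prod.mk.injEq] at hj
    obtain ⟨rfl, rfl⟩ := hj
    rfl
  · intro u hu v hv hadj
    obtain ⟨i1, _, rfl⟩ := Finset.mem_image.mp hu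
    obtain ⟨i2, _, rfl⟩ := Finset.mem_image.mp hv
    by_cases hii : i1 = i2
    · subst hii
      exact G.loopless.irrefl _ hadj
    rcases lt_or_gt_of_ne hii with hlt | hlt
    · obtain ⟨v', hv'K, p, hp⟩ :=
        hcov (Sum.inr (Sum.inr (Sum.inr (⟨((i1, σ i1), (i2, σ i2)), hadj, hlt⟩ : CrossE k n G))))
      rw [hKeq] at hv'K
      obtain ⟨j, _, rfl⟩ := Finset.mem_image.mp hv'K
      exact hrev _ j (σ j) (fun h => by rw [h]) (fun h => by rw [h]) p hp
    · obtain ⟨v', hv'K, p, hp⟩ :=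
        hcov (Sum.inr (Sum.inr (Sum.inr (⟨((i2, σ i2), (i1, σ i1)), hadj.symm, hlt⟩ : CrossE k n G))))
      rw [hKeq] at hv'K
      obtain ⟨j, _, rfl⟩ := Finset.mem_image.mp hv'K
      exact hrev _ j (σ j) (fun h => by rw [h]) (fun h => by rw [h]) p hp
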